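/- Let X ∈ ℝ^{2×2} be the matrix with rows (√3/2, 1/2) and (1/2, √3/2). Then the vector h = (1, −1) with T = {1} satisfies |T| ≤ 1, ‖h_{Tᶜ}‖₁ ≤ ‖h_T‖₁, max_{j∈T} |h_j| = 1, and ‖XᵀXh‖_∞ = 1 − √3/2. Consequently, since 1 − √3/2 < √3/2 − 1/2, the generalized restricted constant of the pair (X, X) with sparsity level 1 is strictly smaller than that of the pair (I, X): there exists an admissible h for which ‖XᵀXh‖_∞ / max_{j∈T}|h_j| = 1 − √3/2 < √3/2 − 1/2 ≤ inf ‖Xh‖_∞ / max_{j∈T}|h_j| over all admissible (T, h). -/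

import Mathlib

open Matrix Finset

lemma sqrt3_lt : 1 - Real.sqrt 3 / 2 < Real.sqrt 3 / 2 - 1 / 2 := by
  have h1 : (1.5:ℝ) < Real.sqrt 3 := by
    nlinarith [Real.sq_sqrt (by norm_num : (3:ℝ) ≥ 0), Real.sqrt_nonneg 3]
  linarith

/-- **Counter-example: `Xᵀ` is not the optimal denoising matrix.** For
`X = [[√3/2, 1/2], [1/2, √3/2]]`, the pair `h = (1,−1)`, `T = {1}` is admissible
(`|T| ≤ 1`, `‖h_{Tᶜ}‖₁ ≤ ‖h_T‖₁`, `max_{j∈T}|h_j| = 1`) and achieves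
`‖XᵀXh‖_∞ = 1 − √3/2 < √3/2 − 1/2`, while `Q = I` satisfies
`(√3/2 − 1/2)·max_{j∈T'}|g_j| ≤ ‖Xg‖_∞` for every admissible `(T', g)`. Hence the GR
constant of `(X, X)` at sparsity level 1 is strictly smaller than that of `(I, X)`. -/
theorem counterexample_X_not_optimal
    (X : Matrix (Fin 2) (Fin 2) ℝ)
    (hX : X = !![Real.sqrt 3 / 2, 1 / 2; 1 / 2, Real.sqrt 3 / 2])
    (h : Fin 2 → ℝ) (hh : h = ![1, -1])
    (T : Finset (Fin 2)) (hT : T = {0}) :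
    T.card ≤ 1 ∧
    (∑ j ∈ Tᶜ, |h j|) ≤ (∑ j ∈ T, |h j|) ∧
    T.sup' (by simp [hT]) (fun j => |h j|) = 1 ∧
    (⨆ i, |(Xᵀ *ᵥ (X *ᵥ h)) i|) = 1 - Real.sqrt 3 / 2 ∧
    1 - Real.sqrt 3 / 2 < Real.sqrt 3 / 2 - 1 / 2 ∧
    (⨆ i, |(Xᵀ *ᵥ (X *ᵥ h)) i|) / T.sup' (by simp [hT]) (fun j => |h j|) =
      1 - Real.sqrt 3 / 2 ∧
    (∀ T' : Finset (Fin 2), T'.card ≤ 1 →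
      ∀ g : Fin 2 → ℝ, g ≠ 0 → (∑ j ∈ T'ᶜ, |g j|) ≤ (∑ j ∈ T', |g j|) →
        ∀ j ∈ T', (Real.sqrt 3 / 2 - 1 / 2) * |g j| ≤ ⨆ i, |(X *ᵥ g) i|) := by
  have hs3 : Real.sqrt 3 ^ 2 = 3 := Real.sq_sqrt (by norm_num)
  have hs3n : (0:ℝ) ≤ Real.sqrt 3 := Real.sqrt_nonneg 3
  have hs3lt : (1.5:ℝ) < Real.sqrt 3 := by nlinarith
  have hs3lt2 : Real.sqrt 3 < 2 := by nlinarith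
  have hTc : (Tᶜ : Finset (Fin 2)) = {1} := by subst hT; decide
  have hsup : (⨆ i, |(Xᵀ *ᵥ (X *ᵥ h)) i|) = 1 - Real.sqrt 3 / 2 := by
    have hfun : (fun i => |(Xᵀ *ᵥ (X *ᵥ h)) i|) = fun _ => 1 - Real.sqrt 3 / 2 := by
      funext i
      fin_cases i
      · simp [hX, hh, Matrix.mulVec, dotProduct, Fin.sum_univ_two,
          Matrix.transpose]
        rw [abs_of_nonneg (by nlinarith)]; nlinarith
      · simp [hX, hh, Matrix.mulVec, dotProduct, Fin.sum_univ_two,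
          Matrix.transpose]
        rw [abs_of_nonpos (by nlinarith)]; nlinarith
    rw [hfun, ciSup_const]
  refine ⟨by simp [hT], ?_, ?_, hsup, sqrt3_lt, ?_, ?_⟩
  · rw [hTc, hT]; simp [hh]
  · subst hT; simp [hh]
  · have : T.sup' (by simp [hT]) (fun j => |h j|) = 1 := by subst hT; simp [hh]
    rw [this, hsup]; simp
  · intro T' hcard g hg hsum j hj
    have hT' : T' = {j} := by
      apply Finset.eq_singleton_iff_unique_mem.mpr
      exact ⟨hj, fun x hx => Finset.card_le_one.mp hcard x hx j hj⟩
    have hj01 : j = 0 ∨ j = 1 := by omega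
    subst hT'
    have hb : BddAbove (Set.range fun i => |(X *ᵥ g) i|) :=
      Set.Finite.bddAbove (Set.finite_range _)
    refine le_trans ?_ (le_ciSup hb j)
    rcases hj01 with rfl | rfl
    · have hc : (({0} : Finset (Fin 2))ᶜ) = {1} := by decide
      rw [hc] at hsum
      simp only [Finset.sum_singleton] at hsum
      simp only [hX, Matrix.mulVec, dotProduct, Fin.sum_univ_two]
      have habs : |Real.sqrt 3 / 2 * g 0| - |1 / 2 * g 1| ≤
          |(!![Real.sqrt 3 / 2, 1 / 2; 1 / 2, Real.sqrt 3 / 2] : Matrix (Fin 2) (Fin 2) ℝ) 0 0 * g 0 +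
            (!![Real.sqrt 3 / 2, 1 / 2; 1 / 2, Real.sqrt 3 / 2] : Matrix (Fin 2) (Fin 2) ℝ) 0 1 * g 1| := by
        try simp only [Matrix.cons_val', Matrix.cons_val_zero, Matrix.cons_val_one,
          Matrix.head_cons, Matrix.empty_val', Matrix.cons_val_fin_one, Matrix.head_fin_const]
        calc |Real.sqrt 3 / 2 * g 0| - |1 / 2 * g 1|
            ≤ |Real.sqrt 3 / 2 * g 0 + 1 / 2 * g 1| := by
              have := abs_add_le (Real.sqrt 3 / 2 * g 0 + 1 / 2 * g 1) (-(1 / 2 * g 1))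
              simp only [add_neg_cancel_right, abs_neg] at this; linarith [this]
          _ = _ := rfl
      have h1 : |Real.sqrt 3 / 2 * g 0| = Real.sqrt 3 / 2 * |g 0| := by
        rw [abs_mul, abs_of_nonneg (by positivity)]
      have h2 : |1 / 2 * g 1| = 1 / 2 * |g 1| := by
        rw [abs_mul]; norm_num
      rw [h1, h2] at habs
      calc (Real.sqrt 3 / 2 - 1 / 2) * |g 0|
          = Real.sqrt 3 / 2 * |g 0| - 1 / 2 * |g 0| := by ring
        _ ≤ Real.sqrt 3 / 2 * |g 0| - 1 / 2 * |g 1| := by nlinarith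
        _ ≤ _ := habs
    · have hc : (({1} : Finset (Fin 2))ᶜ) = {0} := by decide
      rw [hc] at hsum
      simp only [Finset.sum_singleton] at hsum
      simp only [hX, Matrix.mulVec, dotProduct, Fin.sum_univ_two]
      have habs : |Real.sqrt 3 / 2 * g 1| - |1 / 2 * g 0| ≤
          |(!![Real.sqrt 3 / 2, 1 / 2; 1 / 2, Real.sqrt 3 / 2] : Matrix (Fin 2) (Fin 2) ℝ) 1 0 * g 0 +
            (!![Real.sqrt 3 / 2, 1 / 2; 1 / 2, Real.sqrt 3 / 2] : Matrix (Fin 2) (Fin 2) ℝ) 1 1 * g 1| := by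
        try simp only [Matrix.cons_val', Matrix.cons_val_zero, Matrix.cons_val_one,
          Matrix.head_cons, Matrix.empty_val', Matrix.cons_val_fin_one, Matrix.head_fin_const]
        have := abs_add_le (1 / 2 * g 0 + Real.sqrt 3 / 2 * g 1) (-(1 / 2 * g 0))
        rw [show (1 / 2 * g 0 + Real.sqrt 3 / 2 * g 1) + -(1 / 2 * g 0) = Real.sqrt 3 / 2 * g 1 by ring, abs_neg] at this
        calc |Real.sqrt 3 / 2 * g 1| - |1 / 2 * g 0|
            ≤ |1 / 2 * g 0 + Real.sqrt 3 / 2 * g 1| := by linarith [this]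
          _ = _ := rfl
      have h1 : |Real.sqrt 3 / 2 * g 1| = Real.sqrt 3 / 2 * |g 1| := by
        rw [abs_mul, abs_of_nonneg (by positivity)]
      have h2 : |1 / 2 * g 0| = 1 / 2 * |g 0| := by
        rw [abs_mul]; norm_num
      rw [h1, h2] at habs
      calc (Real.sqrt 3 / 2 - 1 / 2) * |g 1|
          = Real.sqrt 3 / 2 * |g 1| - 1 / 2 * |g 1| := by ring
        _ ≤ Real.sqrt 3 / 2 * |g 1| - 1 / 2 * |g 0| := by nlinarith
        _ ≤ _ := habs
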